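/- Let {(x_i, y_i)}_{i=1}^n ⊆ ℝ^d × {−1,1} be a dataset and let N_θ be a depth-2 ReLU network of width k for which there exist λ_1,…,λ_n ≥ 0 and σ'_{i,j} ∈ [0,1] (i ∈ [n], j ∈ [k]) satisfying the KKT conditions: (i) y_i · N_θ(x_i) ≥ 1 for all i ∈ [n]; (ii) λ_i = 0 whenever y_i · N_θ(x_i) ≠ 1; (iii) σ'_{i,j} = 1 if ⟨w_j, x_i⟩ + b_j > 0 and σ'_{i,j} = 0 if ⟨w_j, x_i⟩ + b_j < 0; (iv) w_j = Σ_{i=1}^n λ_i y_i v_j σ'_{i,j} x_i and (v) b_j = Σ_{i=1}^n λ_i y_i v_j σ'_{i,j} for all j ∈ [k]. Let I := {i ∈ [n] : y_i · N_θ(x_i) = 1}, I^+ := {i ∈ I : y_i = 1}, I^− := {i ∈ I : y_i = −1}, and m := |I|. Assume ‖x_i‖ = √d for all i ∈ I; m·(q+1) ≤ (d+1)/3 where q := max_{i≠j, i,j ∈ I} |⟨x_i, x_j⟩|; and |I^+| ≥ c·m and |I^−| ≥ c·m for some c ∈ (0,1]. Then there exists η > 0 such that z := η · Σ_{i ∈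 I} y_i x_i satisfies ‖z‖ ≤ 18·√(2d)/(c·√m), N_θ(x_i − z) ≤ −1 for every i ∈ I^+, and N_θ(x_i + z) ≥ 1 for every i ∈ I^−. -/

import Mathlib

open InnerProductSpace Finset

/-- A depth-2 ReLU network of width `k` with first-layer weights `w`, biases `b`
and second-layer weights `v`. -/
noncomputable def net {d k : ℕ} (w : Fin k → EuclideanSpace ℝ (Fin d))
    (b v : Fin k → ℝ) (z : EuclideanSpace ℝ (Fin d)) : ℝ :=
  ∑ j, v j * max 0 (⟪w j, z⟫_ℝ + b j)

set_option maxHeartbeats 4000000 in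
/-- under the KKT conditions of the max-margin problem, if the set
`I` of examples attaining margin exactly `1` consists of points of norm `√d`
with pairwise inner products at most `q`, `|I|(q+1) ≤ (d+1)/3`, and both labels
make up at least a `c`-fraction of `I`, then there is a single small
perturbation `z = η ∑_{i∈I} yᵢ xᵢ` with `‖z‖ ≤ 18√(2d)/(c√|I|)` flipping the
margin of every positively labeled point of `I` (when subtracted) and of every
negatively labeled point of `I` (when added). -/
theorem kkt_networks_nonrobust_margin_set (d n k : ℕ)
    (x : Fin n → EuclideanSpace ℝ (Fin d)) (y : Fin n → ℝ)
    (w : Fin k → EuclideanSpace ℝ (Fin d)) (b v : Fin k → ℝ)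
    (lam : Fin n → ℝ) (s : Fin n → Fin k → ℝ)
    (hy : ∀ i, y i = 1 ∨ y i = -1)
    (hlam : ∀ i, 0 ≤ lam i)
    (hs01 : ∀ i j, s i j ∈ Set.Icc (0 : ℝ) 1)
    (hmargin : ∀ i, 1 ≤ y i * net w b v (x i))
    (hcomp : ∀ i, y i * net w b v (x i) ≠ 1 → lam i = 0)
    (hs1 : ∀ i j, 0 < ⟪w j, x i⟫_ℝ + b j → s i j = 1)
    (hs0 : ∀ i j, ⟪w j, x i⟫_ℝ + b j < 0 → s i j = 0)
    (hw : ∀ j, w j = ∑ i, (lam i * y i * v j * s i j) • x i)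
    (hb : ∀ j, b j = ∑ i, lam i * y i * v j * s i j)
    (I : Finset (Fin n)) (hI : ∀ i, i ∈ I ↔ y i * net w b v (x i) = 1)
    (hxI : ∀ i ∈ I, ‖x i‖ = Real.sqrt d)
    (q : ℝ) (hq0 : 0 ≤ q)
    (hq : ∀ i ∈ I, ∀ j ∈ I, i ≠ j → |⟪x i, x j⟫_ℝ| ≤ q)
    (hmq : (I.card : ℝ) * (q + 1) ≤ ((d : ℝ) + 1) / 3)
    (c : ℝ) (hc0 : 0 < c) (hc1 : c ≤ 1)
    (hIp : c * I.card ≤ ((I.filter fun i => y i = 1).card : ℝ))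
    (hIm : c * I.card ≤ ((I.filter fun i => y i = -1).card : ℝ)) :
    ∃ η : ℝ, 0 < η ∧
      ‖η • ∑ i ∈ I, y i • x i‖ ≤ 18 * Real.sqrt (2 * d) / (c * Real.sqrt I.card) ∧
      (∀ i ∈ I, y i = 1 → net w b v (x i - η • ∑ l ∈ I, y l • x l) ≤ -1) ∧
      (∀ i ∈ I, y i = -1 → 1 ≤ net w b v (x i + η • ∑ l ∈ I, y l • x l)) := by
  obtain rfl | hne := I.eq_empty_or_nonempty
  · refine ⟨1, one_pos, ?_, by simp, by simp⟩
    simp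
  -- nontrivial case
  have hcard1 : 0 < I.card := Finset.card_pos.mpr hne
  set m : ℝ := (I.card : ℝ) with hmdef
  clear_value m
  have hm0 : 0 < m := by rw [hmdef]; exact_mod_cast hcard1
  -- both label classes are nonempty
  have hpne : (I.filter fun i => y i = 1).Nonempty := by
    apply Finset.card_pos.mp
    have h : (0:ℝ) < ((I.filter fun i => y i = 1).card : ℝ) :=
      lt_of_lt_of_le (mul_pos hc0 hm0) hIp
    exact_mod_cast h
  have hmne : (I.filter fun i => y i = -1).Nonempty := by
    apply Finset.card_pos.mp
    have h : (0:ℝ) < ((I.filter fun i => y i = -1).card : ℝ) :=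
      lt_of_lt_of_le (mul_pos hc0 hm0) hIm
    exact_mod_cast h
  obtain ⟨ip, hip'⟩ := hpne
  obtain ⟨im, him'⟩ := hmne
  rw [Finset.mem_filter] at hip' him'
  have hm2 : (2:ℝ) ≤ m := by
    have h2 : 1 < I.card := Finset.one_lt_card.mpr
      ⟨ip, hip'.1, im, him'.1, by intro hh; rw [hh, him'.2] at hip'; linarith [hip'.2]⟩
    rw [hmdef]; exact_mod_cast h2
  have hq1p : (0:ℝ) < q + 1 := by linarith
  have hd1 : (0:ℝ) < (d:ℝ) + 1 := by positivity
  have hd5 : (5:ℝ) ≤ (d:ℝ) := by nlinarith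
  have hdmq : ((d:ℝ) + 1) / 2 ≤ (d:ℝ) - m * q := by nlinarith
  have hy2 : ∀ i, y i * y i = 1 := by
    intro i; rcases hy i with h | h <;> rw [h] <;> norm_num
  have hyabs : ∀ i, |y i| = 1 := by
    intro i; rcases hy i with h | h <;> rw [h] <;> norm_num
  have hlam0 : ∀ i, i ∉ I → lam i = 0 := fun i hi => hcomp i fun h => hi ((hI i).mpr h)
  have hip : ∀ i ∈ I, ⟪x i, x i⟫_ℝ = (d:ℝ) := by
    intro i hi
    rw [real_inner_self_eq_norm_sq, hxI i hi, Real.sq_sqrt (by positivity)]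
  -- the linear form computed by neuron j (up to the factor v j)
  set φ : Fin k → EuclideanSpace ℝ (Fin d) → ℝ :=
    fun j u => ∑ l ∈ I, lam l * s l j * (y l * (⟪x l, u⟫_ℝ + 1)) with hφdef
  set S : Fin k → ℝ := fun j => ∑ l ∈ I, lam l * s l j with hSdef
  clear_value φ S
  have hS0 : ∀ j, 0 ≤ S j := by
    intro j; rw [hSdef]
    exact Finset.sum_nonneg fun l _ => mul_nonneg (hlam l) (hs01 l j).1
  have Lpre : ∀ j u, ⟪w j, u⟫_ℝ + b j = v j * φ j u := by
    intro j u
    have hw' : w j = ∑ i ∈ I, (lam i * y i * v j * s i j) • x i := by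
      rw [hw j]
      exact (Finset.sum_subset (Finset.subset_univ I) (by
        intro i _ hi; rw [hlam0 i hi]; simp)).symm
    have hb' : b j = ∑ i ∈ I, lam i * y i * v j * s i j := by
      rw [hb j]
      exact (Finset.sum_subset (Finset.subset_univ I) (by
        intro i _ hi; rw [hlam0 i hi]; simp)).symm
    rw [hw', hb', sum_inner, ← Finset.sum_add_distrib]
    rw [hφdef]
    rw [Finset.mul_sum]
    refine Finset.sum_congr rfl fun l _ => ?_
    rw [real_inner_smul_left]; ring
  have Lrelu : ∀ (i : Fin n) j,
      max 0 (⟪w j, x i⟫_ℝ + b j) = s i j * (⟪w j, x i⟫_ℝ + b j) := by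
    intro i j
    rcases lt_trichotomy (⟪w j, x i⟫_ℝ + b j) 0 with h | h | h
    · rw [hs0 i j h, max_eq_left h.le, zero_mul]
    · rw [h, mul_zero]; simp
    · rw [hs1 i j h, one_mul, max_eq_right h.le]
  have Lnet : ∀ u, net w b v u = ∑ j, v j * max 0 (v j * φ j u) := by
    intro u
    simp only [net]
    exact Finset.sum_congr rfl fun j _ => by rw [Lpre j u]
  have hmarg : ∀ i ∈ I, ∑ j, v j ^ 2 * s i j * (y i * φ j (x i)) = 1 := by
    intro i hi
    have h1 : y i * net w b v (x i) = 1 := (hI i).mp hi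
    have h2 : net w b v (x i) = ∑ j, v j ^ 2 * s i j * φ j (x i) := by
      simp only [net]
      refine Finset.sum_congr rfl fun j _ => ?_
      rw [Lrelu i j, Lpre j (x i)]; ring
    rw [h2, Finset.mul_sum] at h1
    rw [← h1]
    exact Finset.sum_congr rfl fun j _ => by ring
  -- key expansion bound
  have hkey : ∀ i ∈ I, ∀ j,
      |y i * φ j (x i) - lam i * s i j * ((d:ℝ) + 1)| ≤ (q + 1) * S j := by
    intro i hi j
    have h1 : y i * φ j (x i) =
        (∑ l ∈ I.erase i, lam l * s l j * (y i * y l * (⟪x l, x i⟫_ℝ + 1)))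
          + lam i * s i j * ((d:ℝ) + 1) := by
      rw [hφdef]
      rw [Finset.mul_sum, ← Finset.sum_erase_add I _ hi]
      congr 1
      · exact Finset.sum_congr rfl fun l _ => by ring
      · rw [hip i hi]
        linear_combination (lam i * s i j * ((d:ℝ) + 1)) * hy2 i
    rw [h1, add_sub_cancel_right]
    calc |∑ l ∈ I.erase i, lam l * s l j * (y i * y l * (⟪x l, x i⟫_ℝ + 1))|
        ≤ ∑ l ∈ I.erase i, |lam l * s l j * (y i * y l * (⟪x l, x i⟫_ℝ + 1))| :=
          Finset.abs_sum_le_sum_abs _ _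
      _ ≤ ∑ l ∈ I.erase i, lam l * s l j * (q + 1) := by
          refine Finset.sum_le_sum fun l hl => ?_
          have hlI := Finset.mem_of_mem_erase hl
          have hne' : l ≠ i := Finset.ne_of_mem_erase hl
          have habs : |⟪x l, x i⟫_ℝ + 1| ≤ q + 1 := by
            calc |⟪x l, x i⟫_ℝ + 1| ≤ |⟪x l, x i⟫_ℝ| + |(1:ℝ)| := abs_add_le _ _
              _ ≤ q + 1 := by
                  have := hq l hlI i hi hne'
                  simp only [abs_one]
                  linarith
          rw [abs_mul, abs_mul, abs_mul, abs_mul, hyabs, hyabs,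
            abs_of_nonneg (hlam l), abs_of_nonneg (hs01 l j).1]
          have h0 : 0 ≤ lam l * s l j := mul_nonneg (hlam l) (hs01 l j).1
          nlinarith [abs_nonneg (⟪x l, x i⟫_ℝ + 1)]
      _ ≤ (q + 1) * S j := by
          rw [hSdef]
          rw [← Finset.sum_mul]
          rw [mul_comm]
          have hsub : ∑ l ∈ I.erase i, lam l * s l j ≤ ∑ l ∈ I, lam l * s l j :=
            Finset.sum_le_sum_of_subset_of_nonneg (Finset.erase_subset _ _)
              (fun l _ _ => mul_nonneg (hlam l) (hs01 l j).1)
          exact mul_le_mul_of_nonneg_left hsub hq1p.le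
  -- consequence: if the (signed) activation is nonpositive then λᵢ sᵢⱼ (d+1) is small
  have hstar : ∀ i ∈ I, ∀ j, y i * φ j (x i) ≤ 0 →
      lam i * s i j * ((d:ℝ) + 1) ≤ (q + 1) * S j := by
    intro i hi j h
    have := (abs_le.mp (hkey i hi j)).1
    linarith
  -- sign facts
  have hsgn : ∀ i j, 0 < s i j → 0 ≤ v j * φ j (x i) := by
    intro i j hsij
    by_contra h
    push_neg at h
    have h0 := hs0 i j (by rw [Lpre j (x i)]; exact h)
    rw [h0] at hsij; exact lt_irrefl _ hsij
  have hs1c : ∀ i j, s i j ≠ 1 → v j * φ j (x i) ≤ 0 := by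
    intro i j hsne
    by_contra h
    push_neg at h
    exact hsne (hs1 i j (by rw [Lpre j (x i)]; exact h))
  -- per-example budget
  set B : Fin n → ℝ := fun i => ∑ j, v j ^ 2 * s i j * (lam i * s i j) with hBdef
  set G : ℝ := ∑ j, v j ^ 2 * S j with hGdef
  clear_value B G
  have hB0 : ∀ i, 0 ≤ B i := by
    intro i; rw [hBdef]
    exact Finset.sum_nonneg fun j _ => mul_nonneg
      (mul_nonneg (sq_nonneg _) (hs01 i j).1) (mul_nonneg (hlam i) (hs01 i j).1)
  have hG0 : 0 ≤ G := by
    rw [hGdef]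
    exact Finset.sum_nonneg fun j _ => mul_nonneg (sq_nonneg _) (hS0 j)
  have FactB : ∀ i ∈ I, ((d:ℝ) + 1) * B i ≤ 1 + (q + 1) * G := by
    intro i hi
    have h1 : ∑ j, v j ^ 2 * s i j * (lam i * s i j * ((d:ℝ) + 1) - (q + 1) * S j) ≤ 1 := by
      refine le_trans (Finset.sum_le_sum fun j _ => ?_) (le_of_eq (hmarg i hi))
      refine mul_le_mul_of_nonneg_left ?_ (mul_nonneg (sq_nonneg _) (hs01 i j).1)
      have := (abs_le.mp (hkey i hi j)).1
      linarith
    have h2 : ∑ j, v j ^ 2 * s i j * (lam i * s i j * ((d:ℝ) + 1) - (q + 1) * S j)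
        = ((d:ℝ) + 1) * B i - (q + 1) * ∑ j, v j ^ 2 * s i j * S j := by
      rw [hBdef, Finset.mul_sum, Finset.mul_sum, ← Finset.sum_sub_distrib]
      exact Finset.sum_congr rfl fun j _ => by ring
    have h3 : ∑ j, v j ^ 2 * s i j * S j ≤ G := by
      rw [hGdef]
      refine Finset.sum_le_sum fun j _ => ?_
      have h4 := mul_nonneg (mul_nonneg (sq_nonneg (v j)) (hS0 j))
        (sub_nonneg.mpr (hs01 i j).2)
      nlinarith [h4]
    nlinarith [mul_le_mul_of_nonneg_left h3 hq1p.le]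
  -- global budget : (q+1) G ≤ 1
  have F1 : (q + 1) * G ≤ 1 := by
    have hstep : ∀ j, v j ≠ 0 → ∀ i ∈ I,
        lam i * s i j * ((d:ℝ) + 1) ≤ s i j * (lam i * s i j) * ((d:ℝ) + 1) + (q + 1) * S j := by
      intro j hvj i hi
      have hsp : 0 ≤ s i j * (lam i * s i j) * ((d:ℝ) + 1) :=
        mul_nonneg (mul_nonneg (hs01 i j).1 (mul_nonneg (hlam i) (hs01 i j).1)) hd1.le
      have hqs : 0 ≤ (q + 1) * S j := mul_nonneg hq1p.le (hS0 j)
      rcases eq_or_ne (s i j) 1 with h1 | h1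
      · rw [h1]; linarith [hqs]
      rcases eq_or_ne (s i j) 0 with h0 | h0
      · rw [h0]; linarith [hqs]
      · have hphi0 : φ j (x i) = 0 := by
          have hle := hs1c i j h1
          have hge := hsgn i j (lt_of_le_of_ne (hs01 i j).1 (Ne.symm h0))
          have : v j * φ j (x i) = 0 := le_antisymm hle hge
          exact (mul_eq_zero.mp this).resolve_left hvj
        have : y i * φ j (x i) ≤ 0 := by rw [hphi0]; simp
        have := hstar i hi j this
        linarith
    have hSle : ∀ j, v j ^ 2 * S j ≤ (3/2) * ∑ i ∈ I, v j ^ 2 * s i j * (lam i * s i j) := by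
      intro j
      rcases eq_or_ne (v j) 0 with hv | hv
      · rw [hv]; simp
      · have hsum := Finset.sum_le_sum (hstep j hv)
        -- ∑ lam s (d+1) = (d+1) S j ; ∑ RHS = (d+1) T + m (q+1) S j
        have e1 : ∑ i ∈ I, lam i * s i j * ((d:ℝ) + 1) = S j * ((d:ℝ) + 1) := by
          rw [hSdef, Finset.sum_mul]
        have e2 : ∑ i ∈ I, (s i j * (lam i * s i j) * ((d:ℝ) + 1) + (q + 1) * S j)
            = (∑ i ∈ I, s i j * (lam i * s i j)) * ((d:ℝ) + 1) + m * ((q + 1) * S j) := by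
          rw [Finset.sum_add_distrib, Finset.sum_const, Finset.sum_mul, nsmul_eq_mul, hmdef]
        rw [e1, e2] at hsum
        have hT0 : 0 ≤ ∑ i ∈ I, s i j * (lam i * s i j) :=
          Finset.sum_nonneg fun i _ => mul_nonneg (hs01 i j).1 (mul_nonneg (hlam i) (hs01 i j).1)
        have hmqS : m * ((q + 1) * S j) ≤ (((d:ℝ) + 1) / 3) * S j := by
          have := mul_le_mul_of_nonneg_right hmq (hS0 j)
          nlinarith
        have hkeyT : S j ≤ (3/2) * ∑ i ∈ I, s i j * (lam i * s i j) := by nlinarith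
        have : ∑ i ∈ I, v j ^ 2 * s i j * (lam i * s i j)
            = v j ^ 2 * ∑ i ∈ I, s i j * (lam i * s i j) := by
          rw [Finset.mul_sum]; exact Finset.sum_congr rfl fun i _ => by ring
        rw [this]
        nlinarith [sq_nonneg (v j)]
    have hGB : G ≤ (3/2) * ∑ i ∈ I, B i := by
      rw [hGdef]
      calc ∑ j, v j ^ 2 * S j ≤ ∑ j, (3/2) * ∑ i ∈ I, v j ^ 2 * s i j * (lam i * s i j) :=
            Finset.sum_le_sum fun j _ => hSle j
        _ = (3/2) * ∑ i ∈ I, B i := by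
            rw [← Finset.mul_sum, Finset.sum_comm]
            simp only [hBdef]
    have hBsum : ((d:ℝ) + 1) * ∑ i ∈ I, B i ≤ m * (1 + (q + 1) * G) := by
      calc ((d:ℝ) + 1) * ∑ i ∈ I, B i = ∑ i ∈ I, ((d:ℝ) + 1) * B i := Finset.mul_sum _ _ _
        _ ≤ ∑ i ∈ I, (1 + (q + 1) * G) := Finset.sum_le_sum fun i hi => FactB i hi
        _ = m * (1 + (q + 1) * G) := by rw [Finset.sum_const, nsmul_eq_mul, hmdef]
    have hqG0 : 0 ≤ (q + 1) * G := mul_nonneg hq1p.le hG0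
    nlinarith [mul_le_mul_of_nonneg_left hGB (mul_nonneg hq1p.le hd1.le),
      mul_le_mul_of_nonneg_left hBsum hq1p.le,
      mul_le_mul_of_nonneg_right hmq hqG0]
  -- positive / negative neurons
  set Pf : Finset (Fin k) := Finset.univ.filter (fun j => 0 < v j) with hPfdef
  set Qf : Finset (Fin k) := Finset.univ.filter (fun j => ¬ 0 < v j) with hQfdef
  set GP : ℝ := ∑ j ∈ Pf, v j ^ 2 * S j with hGPdef
  set GQ : ℝ := ∑ j ∈ Qf, v j ^ 2 * S j with hGQdef
  have hGP0 : 0 ≤ GP := by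
    rw [hGPdef]; exact Finset.sum_nonneg fun j _ => mul_nonneg (sq_nonneg _) (hS0 j)
  have hGQ0 : 0 ≤ GQ := by
    rw [hGQdef]; exact Finset.sum_nonneg fun j _ => mul_nonneg (sq_nonneg _) (hS0 j)
  have hGsplit : G = GP + GQ := by
    rw [hGdef, hGPdef, hGQdef, hPfdef, hQfdef]
    exact (Finset.sum_filter_add_sum_filter_not _ _ _).symm
  -- mass lower bound for neurons aligned with a label class
  have F2 : ∀ σ : ℝ, c * m ≤ ((I.filter fun i => y i = σ).card : ℝ) →
      c * m ≤ (4/3) * (((d:ℝ) + 1) *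
        ∑ j ∈ Finset.univ.filter (fun j => 0 < σ * v j), v j ^ 2 * S j) := by
    intro σ hcard
    set T : Finset (Fin k) := Finset.univ.filter (fun j => 0 < σ * v j) with hT
    set GT : ℝ := ∑ j ∈ T, v j ^ 2 * S j with hGT
    have hGT0 : 0 ≤ GT := Finset.sum_nonneg fun j _ => mul_nonneg (sq_nonneg _) (hS0 j)
    have hone : ∀ i ∈ I.filter (fun i => y i = σ),
        (1:ℝ) ≤ ∑ j ∈ T, v j ^ 2 * (lam i * s i j * ((d:ℝ) + 1) + (q + 1) * S j) := by
      intro i hi'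
      rw [Finset.mem_filter] at hi'
      obtain ⟨hi, hyi⟩ := hi'
      have hsplit := Finset.sum_filter_add_sum_filter_not Finset.univ
        (fun j => 0 < σ * v j) (fun j => v j ^ 2 * s i j * (y i * φ j (x i)))
      have hcompl : ∑ j ∈ Finset.univ.filter (fun j => ¬ 0 < σ * v j),
          v j ^ 2 * s i j * (y i * φ j (x i)) ≤ 0 := by
        refine Finset.sum_nonpos fun j hj => ?_
        rw [Finset.mem_filter] at hj
        have hσv : σ * v j ≤ 0 := not_lt.mp hj.2
        rcases eq_or_lt_of_le (hs01 i j).1 with h0 | h0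
        · rw [← h0]; simp
        · have hvφ := hsgn i j h0
          have : v j ^ 2 * (y i * φ j (x i)) ≤ 0 := by rw [hyi]; nlinarith
          nlinarith [(hs01 i j).1, (hs01 i j).2]
      have hTle : ∀ j ∈ T, v j ^ 2 * s i j * (y i * φ j (x i)) ≤
          v j ^ 2 * (lam i * s i j * ((d:ℝ) + 1) + (q + 1) * S j) := by
        intro j _
        have hub := (abs_le.mp (hkey i hi j)).2
        have hb0 : 0 ≤ lam i * s i j * ((d:ℝ) + 1) + (q + 1) * S j :=
          add_nonneg (mul_nonneg (mul_nonneg (hlam i) (hs01 i j).1) hd1.le)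
            (mul_nonneg hq1p.le (hS0 j))
        have hyφub : y i * φ j (x i) ≤ lam i * s i j * ((d:ℝ) + 1) + (q + 1) * S j := by
          linarith
        rcases le_or_gt (y i * φ j (x i)) 0 with hc' | hc'
        · have : v j ^ 2 * s i j * (y i * φ j (x i)) ≤ 0 :=
            mul_nonpos_of_nonneg_of_nonpos (mul_nonneg (sq_nonneg _) (hs01 i j).1) hc'
          nlinarith [sq_nonneg (v j)]
        · have h1 := mul_le_mul_of_nonneg_left hyφub (sq_nonneg (v j))
          have h3 := mul_le_mul_of_nonneg_left (hs01 i j).2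
            (mul_nonneg (sq_nonneg (v j)) hc'.le)
          nlinarith [h1, h3]
      calc (1:ℝ) = _ := (hmarg i hi).symm
        _ = _ := hsplit.symm
        _ ≤ (∑ j ∈ T, v j ^ 2 * s i j * (y i * φ j (x i))) + 0 := by
            exact add_le_add le_rfl hcompl
        _ = ∑ j ∈ T, v j ^ 2 * s i j * (y i * φ j (x i)) := add_zero _
        _ ≤ ∑ j ∈ T, v j ^ 2 * (lam i * s i j * ((d:ℝ) + 1) + (q + 1) * S j) :=
            Finset.sum_le_sum hTle
    -- sum the inequality over the class
    have hsum := Finset.sum_le_sum hone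
    rw [Finset.sum_const, nsmul_eq_mul, mul_one] at hsum
    rw [Finset.sum_comm] at hsum
    have hinner : ∀ j ∈ T, ∑ i ∈ I.filter (fun i => y i = σ),
        v j ^ 2 * (lam i * s i j * ((d:ℝ) + 1) + (q + 1) * S j)
        ≤ v j ^ 2 * S j * ((d:ℝ) + 1) + m * (v j ^ 2 * ((q + 1) * S j)) := by
      intro j _
      have e3 : ∑ i ∈ I.filter (fun i => y i = σ),
          v j ^ 2 * (lam i * s i j * ((d:ℝ) + 1) + (q + 1) * S j)
          = v j ^ 2 * ((d:ℝ) + 1) * (∑ i ∈ I.filter (fun i => y i = σ), lam i * s i j)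
            + ((I.filter (fun i => y i = σ)).card : ℝ) * (v j ^ 2 * ((q + 1) * S j)) := by
        calc ∑ i ∈ I.filter (fun i => y i = σ),
              v j ^ 2 * (lam i * s i j * ((d:ℝ) + 1) + (q + 1) * S j)
            = ∑ i ∈ I.filter (fun i => y i = σ),
              (v j ^ 2 * ((d:ℝ) + 1) * (lam i * s i j) + v j ^ 2 * ((q + 1) * S j)) :=
              Finset.sum_congr rfl fun i _ => by ring
          _ = _ := by
              rw [Finset.sum_add_distrib, ← Finset.mul_sum, Finset.sum_const, nsmul_eq_mul]
      rw [e3]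
      have hsub : ∑ i ∈ I.filter (fun i => y i = σ), lam i * s i j ≤ S j := by
        rw [hSdef]
        exact Finset.sum_le_sum_of_subset_of_nonneg (Finset.filter_subset _ _)
          (fun l _ _ => mul_nonneg (hlam l) (hs01 l j).1)
      have hcm : ((I.filter (fun i => y i = σ)).card : ℝ) ≤ m := by
        rw [hmdef]
        exact_mod_cast Finset.card_le_card (Finset.filter_subset _ _)
      have h1 := mul_le_mul_of_nonneg_left hsub (mul_nonneg (sq_nonneg (v j)) hd1.le)
      have h2 := mul_le_mul_of_nonneg_right hcm
        (mul_nonneg (sq_nonneg (v j)) (mul_nonneg hq1p.le (hS0 j)))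
      nlinarith
    have hfin : ((I.filter fun i => y i = σ).card : ℝ)
        ≤ GT * ((d:ℝ) + 1) + m * ((q + 1) * GT) := by
      calc ((I.filter fun i => y i = σ).card : ℝ) ≤ _ := hsum
        _ ≤ ∑ j ∈ T, (v j ^ 2 * S j * ((d:ℝ) + 1) + m * (v j ^ 2 * ((q + 1) * S j))) :=
            Finset.sum_le_sum hinner
        _ = GT * ((d:ℝ) + 1) + m * ((q + 1) * GT) := by
            rw [Finset.sum_add_distrib, ← Finset.sum_mul, ← Finset.mul_sum, hGT]
            congr 2
            · rw [Finset.mul_sum]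
              exact Finset.sum_congr rfl fun j _ => by ring
    have hmqGT : m * ((q + 1) * GT) ≤ (((d:ℝ) + 1) / 3) * GT := by
      have := mul_le_mul_of_nonneg_right hmq hGT0
      nlinarith
    nlinarith
  have hF2P : c * m ≤ (4/3) * (((d:ℝ) + 1) * GP) := by
    have h := F2 1 hIp
    have hsub : Finset.univ.filter (fun j => 0 < (1:ℝ) * v j) ⊆ Pf := by
      rw [hPfdef]
      intro j hj
      rw [Finset.mem_filter] at hj ⊢
      exact ⟨hj.1, by linarith [hj.2]⟩
    have hle : ∑ j ∈ Finset.univ.filter (fun j => 0 < (1:ℝ) * v j), v j ^ 2 * S j ≤ GP := by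
      rw [hGPdef]
      exact Finset.sum_le_sum_of_subset_of_nonneg hsub
        (fun j _ _ => mul_nonneg (sq_nonneg _) (hS0 j))
    nlinarith [mul_le_mul_of_nonneg_left hle hd1.le]
  have hF2Q : c * m ≤ (4/3) * (((d:ℝ) + 1) * GQ) := by
    have h := F2 (-1) hIm
    have hsub : Finset.univ.filter (fun j => 0 < (-1:ℝ) * v j) ⊆ Qf := by
      rw [hQfdef]
      intro j hj
      rw [Finset.mem_filter] at hj ⊢
      exact ⟨hj.1, by intro hh; linarith [hj.2]⟩
    have hle : ∑ j ∈ Finset.univ.filter (fun j => 0 < (-1:ℝ) * v j), v j ^ 2 * S j ≤ GQ := by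
      rw [hGQdef]
      exact Finset.sum_le_sum_of_subset_of_nonneg hsub
        (fun j _ _ => mul_nonneg (sq_nonneg _) (hS0 j))
    nlinarith [mul_le_mul_of_nonneg_left hle hd1.le]
  -- the step size
  have hcm0 : 0 < c * m := mul_pos hc0 hm0
  set τ : ℝ := 4 * ((d:ℝ) + 1) / (c * m) with hτdef
  clear_value τ
  have hτ0 : 0 < τ := by rw [hτdef]; exact div_pos (by linarith) hcm0
  have hden0 : 0 < (d:ℝ) - m * q := lt_of_lt_of_le (by linarith) hdmq
  set η : ℝ := (2 * (q + 1) + τ) / ((d:ℝ) - m * q) with hηdef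
  clear_value η
  have hη0 : 0 < η := by rw [hηdef]; exact div_pos (by linarith) hden0
  have hτη : η * ((d:ℝ) - m * q) = 2 * (q + 1) + τ := by
    rw [hηdef]; field_simp; exact div_self (ne_of_gt (by linarith))
  have hτGP : 3 ≤ τ * GP := by
    rw [hτdef, div_mul_eq_mul_div, le_div_iff₀ hcm0]
    nlinarith [hF2P]
  have hτGQ : 3 ≤ τ * GQ := by
    rw [hτdef, div_mul_eq_mul_div, le_div_iff₀ hcm0]
    nlinarith [hF2Q]
  have hηcm : η * (c * m) ≤ 28/3 := by
    have hcmm : c * m ≤ m := by nlinarith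
    have h1 : (q + 1) * (c * m) ≤ (q + 1) * m := mul_le_mul_of_nonneg_left hcmm hq1p.le
    have hnum : 2 * (q + 1) * (c * m) + 4 * ((d:ℝ) + 1) ≤ (14/3) * ((d:ℝ) + 1) := by
      nlinarith [hmq, h1]
    have heq : η * (c * m) = (2 * (q + 1) * (c * m) + 4 * ((d:ℝ) + 1)) / ((d:ℝ) - m * q) := by
      rw [hηdef, hτdef]; field_simp
    rw [heq, div_le_iff₀ hden0]
    nlinarith [hdmq, hnum]
  -- the perturbation direction
  set ζ : EuclideanSpace ℝ (Fin d) := ∑ l ∈ I, y l • x l with hζdef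
  clear_value ζ
  have hinnerζ : ∀ l, ⟪x l, ζ⟫_ℝ = ∑ p ∈ I, y p * ⟪x l, x p⟫_ℝ := by
    intro l
    rw [hζdef, inner_sum]
    exact Finset.sum_congr rfl fun p _ => real_inner_smul_right _ _ _
  have hdot : ∀ l ∈ I, |y l * ⟪x l, ζ⟫_ℝ - (d:ℝ)| ≤ m * q := by
    intro l hl
    have h1 : y l * ⟪x l, ζ⟫_ℝ
        = (∑ p ∈ I.erase l, y l * y p * ⟪x l, x p⟫_ℝ) + (d:ℝ) := by
      rw [hinnerζ l, Finset.mul_sum, ← Finset.sum_erase_add I _ hl]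
      congr 1
      · exact Finset.sum_congr rfl fun p _ => by ring
      · rw [hip l hl]; linear_combination (d:ℝ) * hy2 l
    rw [h1, add_sub_cancel_right]
    calc |∑ p ∈ I.erase l, y l * y p * ⟪x l, x p⟫_ℝ|
        ≤ ∑ p ∈ I.erase l, |y l * y p * ⟪x l, x p⟫_ℝ| := Finset.abs_sum_le_sum_abs _ _
      _ ≤ ∑ _p ∈ I.erase l, q := by
          refine Finset.sum_le_sum fun p hp => ?_
          rw [abs_mul, abs_mul, hyabs, hyabs, one_mul, one_mul]
          exact hq l hl p (Finset.mem_of_mem_erase hp) (Ne.symm (Finset.ne_of_mem_erase hp))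
      _ = ((I.erase l).card : ℝ) * q := by rw [Finset.sum_const, nsmul_eq_mul]
      _ ≤ m * q := by
          refine mul_le_mul_of_nonneg_right ?_ hq0
          rw [hmdef]
          exact_mod_cast Finset.card_le_card (Finset.erase_subset _ _)
  set χ : Fin k → ℝ := fun j => ∑ l ∈ I, lam l * s l j * (y l * ⟪x l, ζ⟫_ℝ) with hχdef
  clear_value χ
  have hχlb : ∀ j, ((d:ℝ) - m * q) * S j ≤ χ j := by
    intro j
    rw [hχdef, hSdef]
    simp only []
    rw [Finset.mul_sum]
    refine Finset.sum_le_sum fun l hl => ?_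
    have h := (abs_le.mp (hdot l hl)).1
    have h0 : 0 ≤ lam l * s l j := mul_nonneg (hlam l) (hs01 l j).1
    nlinarith [mul_le_mul_of_nonneg_left (by linarith : (d:ℝ) - m * q ≤ y l * ⟪x l, ζ⟫_ℝ) h0]
  have hφz : ∀ (j : Fin k) (t : ℝ) (u : EuclideanSpace ℝ (Fin d)),
      φ j (u + t • ζ) = φ j u + t * χ j := by
    intro j t u
    rw [hφdef, hχdef]
    simp only []
    rw [Finset.mul_sum, ← Finset.sum_add_distrib]
    refine Finset.sum_congr rfl fun l _ => ?_
    rw [inner_add_right, real_inner_smul_right]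
    ring
  -- the norm bound
  have hζl : ∀ u, ⟪ζ, u⟫_ℝ = ∑ l ∈ I, y l * ⟪x l, u⟫_ℝ := by
    intro u
    rw [hζdef, sum_inner]
    exact Finset.sum_congr rfl fun l _ => real_inner_smul_left _ _ _
  have hζsq : ⟪ζ, ζ⟫_ℝ ≤ m * (2 * (d:ℝ)) := by
    rw [hζl ζ]
    have hqd : m * q ≤ (d:ℝ) := by linarith
    calc ∑ l ∈ I, y l * ⟪x l, ζ⟫_ℝ ≤ ∑ _l ∈ I, ((d:ℝ) + m * q) := by
          refine Finset.sum_le_sum fun l hl => ?_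
          have := (abs_le.mp (hdot l hl)).2
          linarith
      _ = m * ((d:ℝ) + m * q) := by rw [Finset.sum_const, nsmul_eq_mul, hmdef]
      _ ≤ m * (2 * (d:ℝ)) := by nlinarith
  have hnζ : ‖ζ‖ ≤ Real.sqrt m * Real.sqrt (2 * (d:ℝ)) := by
    have h2 : ‖ζ‖ ^ 2 ≤ m * (2 * (d:ℝ)) := by
      rw [← real_inner_self_eq_norm_sq]; exact hζsq
    calc ‖ζ‖ = Real.sqrt (‖ζ‖ ^ 2) := (Real.sqrt_sq (norm_nonneg ζ)).symm
      _ ≤ Real.sqrt (m * (2 * (d:ℝ))) := Real.sqrt_le_sqrt h2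
      _ = Real.sqrt m * Real.sqrt (2 * (d:ℝ)) := Real.sqrt_mul hm0.le _
  have hsm : 0 < Real.sqrt m := Real.sqrt_pos.mpr hm0
  have hsd : 0 ≤ Real.sqrt (2 * (d:ℝ)) := Real.sqrt_nonneg _
  have hnorm : ‖η • ζ‖ ≤ 18 * Real.sqrt (2 * (d:ℝ)) / (c * Real.sqrt m) := by
    rw [le_div_iff₀ (mul_pos hc0 hsm)]
    have hmul : Real.sqrt m * Real.sqrt m = m := Real.mul_self_sqrt hm0.le
    calc ‖η • ζ‖ * (c * Real.sqrt m) = η * ‖ζ‖ * (c * Real.sqrt m) := by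
          rw [norm_smul, Real.norm_eq_abs, abs_of_pos hη0]
      _ ≤ η * (Real.sqrt m * Real.sqrt (2 * (d:ℝ))) * (c * Real.sqrt m) :=
          mul_le_mul_of_nonneg_right (mul_le_mul_of_nonneg_left hnζ hη0.le)
            (mul_nonneg hc0.le hsm.le)
      _ = η * c * (Real.sqrt m * Real.sqrt m) * Real.sqrt (2 * (d:ℝ)) := by ring
      _ = (η * (c * m)) * Real.sqrt (2 * (d:ℝ)) := by rw [hmul]; ring
      _ ≤ (28/3) * Real.sqrt (2 * (d:ℝ)) := mul_le_mul_of_nonneg_right hηcm hsd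
      _ ≤ 18 * Real.sqrt (2 * (d:ℝ)) := by nlinarith [hsd]
  have hηχ : ∀ j, (2 * (q + 1) + τ) * S j ≤ η * χ j := by
    intro j
    have h4 := mul_le_mul_of_nonneg_left (hχlb j) hη0.le
    have h5 : (2 * (q + 1) + τ) * S j = η * ((d:ℝ) - m * q) * S j := by rw [hτη]
    linarith [h4, h5]
  have hS2 : ∀ j, 0 ≤ (2 * (q + 1) + τ) * S j :=
    fun j => mul_nonneg (by linarith) (hS0 j)
  have hτS : ∀ j, 0 ≤ τ * S j := fun j => mul_nonneg hτ0.le (hS0 j)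
  -- flipping the negatively labeled points
  have mainM : ∀ i ∈ I, y i = -1 → 1 ≤ net w b v (x i + η • ζ) := by
    intro i hi hyi
    have hφu : ∀ j, φ j (x i + η • ζ) = φ j (x i) + η * χ j := fun j => hφz j η (x i)
    have hflb : ∀ j, -(lam i * s i j * ((d:ℝ) + 1)) - (q + 1) * S j ≤ φ j (x i) := by
      intro j
      have h2 := (abs_le.mp (hkey i hi j)).2
      rw [hyi] at h2
      linarith
    have hA : ∀ j ∈ Pf, τ * (v j ^ 2 * S j) ≤ v j * max 0 (v j * φ j (x i + η • ζ)) := by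
      intro j hj
      rw [hPfdef, Finset.mem_filter] at hj
      have hv : 0 < v j := hj.2
      have hp : lam i * s i j * ((d:ℝ) + 1) ≤ (q + 1) * S j := by
        rcases eq_or_lt_of_le (hs01 i j).1 with h0 | h0
        · rw [← h0]
          linarith [mul_nonneg hq1p.le (hS0 j)]
        · have hvφ := hsgn i j h0
          have hφ0 : 0 ≤ φ j (x i) := by
            by_contra hcon
            push_neg at hcon
            linarith [mul_neg_of_pos_of_neg hv hcon]
          exact hstar i hi j (by rw [hyi]; linarith)
      have hφulb : τ * S j ≤ φ j (x i + η • ζ) := by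
        linarith [hηχ j, hflb j, hφu j]
      have hφu0 : 0 ≤ φ j (x i + η • ζ) := le_trans (hτS j) hφulb
      rw [max_eq_right (mul_nonneg hv.le hφu0)]
      linarith [mul_le_mul_of_nonneg_left hφulb (sq_nonneg (v j))]
    have hB : ∀ j ∈ Qf, -(((d:ℝ) + 1) * (v j ^ 2 * s i j * (lam i * s i j)))
        ≤ v j * max 0 (v j * φ j (x i + η • ζ)) := by
      intro j hj
      rw [hQfdef, Finset.mem_filter] at hj
      have hvle : v j ≤ 0 := not_lt.mp hj.2
      have hRHS0 : 0 ≤ ((d:ℝ) + 1) * (v j ^ 2 * s i j * (lam i * s i j)) :=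
        mul_nonneg hd1.le (mul_nonneg (mul_nonneg (sq_nonneg _) (hs01 i j).1)
          (mul_nonneg (hlam i) (hs01 i j).1))
      rcases eq_or_lt_of_le hvle with heq | hlt
      · rw [heq]
        norm_num
      rcases eq_or_ne (s i j) 1 with hs1e | hs1e
      · rcases le_or_gt (v j * φ j (x i + η • ζ)) 0 with hm' | hm'
        · rw [max_eq_left hm', mul_zero]; linarith
        · rw [max_eq_right hm'.le]
          have hφlb : -(lam i * s i j * ((d:ℝ) + 1)) ≤ φ j (x i + η • ζ) := by
            linarith [hηχ j, hflb j, hφu j, hτS j, mul_nonneg hq1p.le (hS0 j)]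
          rw [hs1e]
          rw [hs1e] at hφlb
          linarith [mul_le_mul_of_nonneg_left hφlb (sq_nonneg (v j))]
      · have hvφ := hs1c i j hs1e
        have hφxi0 : 0 ≤ φ j (x i) := by
          by_contra hcon
          push_neg at hcon
          linarith [mul_pos_of_neg_of_neg hlt hcon]
        have hφu0 : 0 ≤ φ j (x i + η • ζ) := by
          linarith [hηχ j, hS2 j, hφu j]
        have hvφu : v j * φ j (x i + η • ζ) ≤ 0 := by
          linarith [mul_nonneg (neg_nonneg.mpr hlt.le) hφu0]
        rw [max_eq_left hvφu, mul_zero]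
        linarith
    have hsplit := Finset.sum_filter_add_sum_filter_not Finset.univ (fun j => 0 < v j)
      (fun j => v j * max 0 (v j * φ j (x i + η • ζ)))
    rw [← hPfdef, ← hQfdef] at hsplit
    have hAs : τ * GP ≤ ∑ j ∈ Pf, v j * max 0 (v j * φ j (x i + η • ζ)) := by
      rw [hGPdef, Finset.mul_sum]
      exact Finset.sum_le_sum hA
    have hBs : -(((d:ℝ) + 1) * B i) ≤ ∑ j ∈ Qf, v j * max 0 (v j * φ j (x i + η • ζ)) := by
      have h2 := Finset.sum_le_sum hB
      have h3 : ∑ j ∈ Qf, -(((d:ℝ) + 1) * (v j ^ 2 * s i j * (lam i * s i j)))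
          = -(((d:ℝ) + 1) * ∑ j ∈ Qf, v j ^ 2 * s i j * (lam i * s i j)) := by
        simp only [Finset.mul_sum, ← Finset.sum_neg_distrib]
      have h4 : ∑ j ∈ Qf, v j ^ 2 * s i j * (lam i * s i j) ≤ B i := by
        rw [hBdef]
        exact Finset.sum_le_sum_of_subset_of_nonneg (Finset.subset_univ Qf)
          (fun j _ _ => mul_nonneg (mul_nonneg (sq_nonneg _) (hs01 i j).1)
            (mul_nonneg (hlam i) (hs01 i j).1))
      have h5 := mul_le_mul_of_nonneg_left h4 hd1.le
      rw [h3] at h2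
      linarith [h2, h5]
    rw [Lnet (x i + η • ζ), ← hsplit]
    have hFB := FactB i hi
    linarith [hAs, hBs, hτGP, F1]
  -- flipping the positively labeled points
  have mainP : ∀ i ∈ I, y i = 1 → net w b v (x i - η • ζ) ≤ -1 := by
    intro i hi hyi
    have hsub : x i - η • ζ = x i + (-η) • ζ := by
      rw [neg_smul, ← sub_eq_add_neg]
    rw [hsub]
    have hφu : ∀ j, φ j (x i + (-η) • ζ) = φ j (x i) + (-η) * χ j :=
      fun j => hφz j (-η) (x i)
    have hfub : ∀ j, φ j (x i) ≤ lam i * s i j * ((d:ℝ) + 1) + (q + 1) * S j := by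
      intro j
      have h2 := (abs_le.mp (hkey i hi j)).2
      rw [hyi] at h2
      linarith
    have hA : ∀ j ∈ Pf, v j * max 0 (v j * φ j (x i + (-η) • ζ))
        ≤ ((d:ℝ) + 1) * (v j ^ 2 * s i j * (lam i * s i j)) := by
      intro j hj
      rw [hPfdef, Finset.mem_filter] at hj
      have hv : 0 < v j := hj.2
      have hRHS0 : 0 ≤ ((d:ℝ) + 1) * (v j ^ 2 * s i j * (lam i * s i j)) :=
        mul_nonneg hd1.le (mul_nonneg (mul_nonneg (sq_nonneg _) (hs01 i j).1)
          (mul_nonneg (hlam i) (hs01 i j).1))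
      rcases eq_or_ne (s i j) 1 with hs1e | hs1e
      · have hφuub : φ j (x i + (-η) • ζ) ≤ lam i * s i j * ((d:ℝ) + 1) := by
          linarith [hηχ j, hfub j, hφu j, hτS j, mul_nonneg hq1p.le (hS0 j)]
        rcases le_or_gt (v j * φ j (x i + (-η) • ζ)) 0 with hm' | hm'
        · rw [max_eq_left hm', mul_zero]; linarith
        · rw [max_eq_right hm'.le]
          rw [hs1e]
          rw [hs1e] at hφuub
          linarith [mul_le_mul_of_nonneg_left hφuub (sq_nonneg (v j))]
      · have hvφ := hs1c i j hs1e
        have hφxi0 : φ j (x i) ≤ 0 := by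
          by_contra hcon
          push_neg at hcon
          linarith [mul_pos hv hcon]
        have hφu0 : φ j (x i + (-η) • ζ) ≤ 0 := by
          linarith [hηχ j, hS2 j, hφu j]
        have hvφu : v j * φ j (x i + (-η) • ζ) ≤ 0 := by
          linarith [mul_nonneg hv.le (neg_nonneg.mpr hφu0)]
        rw [max_eq_left hvφu, mul_zero]
        linarith
    have hB : ∀ j ∈ Qf, v j * max 0 (v j * φ j (x i + (-η) • ζ))
        ≤ -(τ * (v j ^ 2 * S j)) := by
      intro j hj
      rw [hQfdef, Finset.mem_filter] at hj
      have hvle : v j ≤ 0 := not_lt.mp hj.2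
      rcases eq_or_lt_of_le hvle with heq | hlt
      · rw [heq]
        norm_num
      · have hp : lam i * s i j * ((d:ℝ) + 1) ≤ (q + 1) * S j := by
          rcases eq_or_lt_of_le (hs01 i j).1 with h0 | h0
          · rw [← h0]
            linarith [mul_nonneg hq1p.le (hS0 j)]
          · have hvφ := hsgn i j h0
            have hφ0 : φ j (x i) ≤ 0 := by
              by_contra hcon
              push_neg at hcon
              linarith [mul_neg_of_neg_of_pos hlt hcon]
            exact hstar i hi j (by rw [hyi]; linarith)
        have hφuub : φ j (x i + (-η) • ζ) ≤ -(τ * S j) := by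
          linarith [hηχ j, hfub j, hφu j, hp]
        have hφu0 : φ j (x i + (-η) • ζ) ≤ 0 := le_trans hφuub (by linarith [hτS j])
        have hvφu0 : 0 ≤ v j * φ j (x i + (-η) • ζ) := by
          linarith [mul_nonneg (neg_nonneg.mpr hlt.le) (neg_nonneg.mpr hφu0)]
        rw [max_eq_right hvφu0]
        linarith [mul_le_mul_of_nonneg_left hφuub (sq_nonneg (v j))]
    have hsplit := Finset.sum_filter_add_sum_filter_not Finset.univ (fun j => 0 < v j)
      (fun j => v j * max 0 (v j * φ j (x i + (-η) • ζ)))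
    rw [← hPfdef, ← hQfdef] at hsplit
    have hAs : ∑ j ∈ Pf, v j * max 0 (v j * φ j (x i + (-η) • ζ))
        ≤ ((d:ℝ) + 1) * B i := by
      have h2 := Finset.sum_le_sum hA
      have h3 : ∑ j ∈ Pf, ((d:ℝ) + 1) * (v j ^ 2 * s i j * (lam i * s i j))
          = ((d:ℝ) + 1) * ∑ j ∈ Pf, v j ^ 2 * s i j * (lam i * s i j) := by
        rw [Finset.mul_sum]
      have h4 : ∑ j ∈ Pf, v j ^ 2 * s i j * (lam i * s i j) ≤ B i := by
        rw [hBdef]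
        exact Finset.sum_le_sum_of_subset_of_nonneg (Finset.subset_univ Pf)
          (fun j _ _ => mul_nonneg (mul_nonneg (sq_nonneg _) (hs01 i j).1)
            (mul_nonneg (hlam i) (hs01 i j).1))
      have h5 := mul_le_mul_of_nonneg_left h4 hd1.le
      rw [h3] at h2
      linarith [h2, h5]
    have hBs : ∑ j ∈ Qf, v j * max 0 (v j * φ j (x i + (-η) • ζ)) ≤ -(τ * GQ) := by
      have h2 := Finset.sum_le_sum hB
      have h3 : ∑ j ∈ Qf, -(τ * (v j ^ 2 * S j)) = -(τ * GQ) := by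
        rw [hGQdef]
        simp only [Finset.mul_sum, ← Finset.sum_neg_distrib]
      rw [h3] at h2
      exact h2
    rw [Lnet (x i + (-η) • ζ), ← hsplit]
    have hFB := FactB i hi
    linarith [hAs, hBs, hτGQ, F1]
  exact ⟨η, hη0, hnorm, mainP, mainM⟩
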